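/- Let (Ω, F, P) be a complete probability space, D ⊂ ℝⁿ open, p > 1, k ∈ {1,…,n}, f, g ∈ L^p(D × Ω), and let (h_m) be a sequence of nonzero real numbers with h_m → 0. Suppose that for every smooth compactly supported φ : D → ℝ and every bounded measurable X : Ω → ℝ one has ∬_{D×Ω} (Δ_{k,h_m} f(x,ω) − g(x,ω)) φ(x) X(ω) dx dP(ω) → 0 as m → ∞ (for m so large that |h_m| < dist(supp φ, ∂D)). Then for every smooth compactly supported φ : D → ℝ one has, with probability one, ∫_D f(x,ω) ∂_k φ(x) dx = −∫_D g(x,ω) φ(x) dx; i.e. g is the weak derivative of f in direction k with probability one. -/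

import Mathlib

open MeasureTheory Set Filter
open scoped ENNReal Topology

/-- A smooth compactly supported test function with support contained in `D`. -/
def IsTest {E F : Type*} [NormedAddCommGroup E] [NormedSpace ℝ E]
    [NormedAddCommGroup F] [NormedSpace ℝ F] (D : Set E) (φ : E → F) : Prop :=
  ContDiff ℝ (⊤ : ℕ∞) φ ∧ HasCompactSupport φ ∧ tsupport φ ⊆ D

/-- `k`-th partial derivative of a scalar function on `ℝⁿ`. -/
noncomputable def pder {n : ℕ} (k : Fin n) (φ : EuclideanSpace ℝ (Fin n) → ℝ)
    (x : EuclideanSpace ℝ (Fin n)) : ℝ :=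
  fderiv ℝ φ x (EuclideanSpace.single k 1)

/-- Finite difference quotient (in the space variable) in direction `e_k` with step `h`,
for a random field `f : D × Ω → ℝ`. -/
noncomputable def diffQuotR {n : ℕ} {Ω : Type*} (k : Fin n) (h : ℝ)
    (f : EuclideanSpace ℝ (Fin n) × Ω → ℝ) (q : EuclideanSpace ℝ (Fin n) × Ω) : ℝ :=
  (f (q.1 + h • EuclideanSpace.single k 1, q.2) - f q) / h

section Aux
variable {α Ω : Type*} [MeasurableSpace α] [MeasurableSpace Ω]

lemma indicator_eq_of_support {F : α × Ω → ℝ} {K : Set α}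
    (h0 : ∀ q : α × Ω, q.1 ∉ K → F q = 0) :
    (K ×ˢ (univ : Set Ω)).indicator F = F := by
  funext q
  by_cases hq : q.1 ∈ K
  · rw [indicator_of_mem (by simp [hq])]
  · rw [indicator_of_notMem (by simp [hq]), h0 q hq]

lemma integrable_restrict_congr_of_support {μ : Measure α} [SFinite μ] {P : Measure Ω} [SFinite P]
    {F : α × Ω → ℝ} {K S S' : Set α} (hK : MeasurableSet K) (hKS : K ⊆ S) (hKS' : K ⊆ S')
    (h0 : ∀ q : α × Ω, q.1 ∉ K → F q = 0) :
    Integrable F ((μ.restrict S).prod P) ↔ Integrable F ((μ.restrict S').prod P) := by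
  have hKm : MeasurableSet (K ×ˢ (univ : Set Ω)) := hK.prod MeasurableSet.univ
  have key : ∀ (T : Set α), K ⊆ T →
      (Integrable F ((μ.restrict T).prod P) ↔ Integrable F ((μ.prod P).restrict (K ×ˢ univ))) := by
    intro T hKT
    rw [← Measure.restrict_univ (μ := P), Measure.prod_restrict, Measure.restrict_univ]
    constructor
    · intro hI
      rw [← indicator_eq_of_support h0] at hI
      have := (integrable_indicator_iff hKm).1 hI
      rwa [IntegrableOn, Measure.restrict_restrict hKm, prod_inter_prod, univ_inter,
        inter_eq_self_of_subset_left hKT] at this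
    · intro hI
      rw [← indicator_eq_of_support h0]
      refine (integrable_indicator_iff hKm).2 ?_
      rwa [IntegrableOn, Measure.restrict_restrict hKm, prod_inter_prod, univ_inter,
        inter_eq_self_of_subset_left hKT]
  rw [key S hKS, key S' hKS']

lemma integral_restrict_congr_of_support {μ : Measure α} [SFinite μ] {P : Measure Ω} [SFinite P]
    {F : α × Ω → ℝ} {K S S' : Set α} (hK : MeasurableSet K) (hKS : K ⊆ S) (hKS' : K ⊆ S')
    (h0 : ∀ q : α × Ω, q.1 ∉ K → F q = 0) :
    ∫ q, F q ∂((μ.restrict S).prod P) = ∫ q, F q ∂((μ.restrict S').prod P) := by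
  have hKm : MeasurableSet (K ×ˢ (univ : Set Ω)) := hK.prod MeasurableSet.univ
  have key : ∀ (T : Set α), K ⊆ T →
      ∫ q, F q ∂((μ.restrict T).prod P) = ∫ q, F q ∂((μ.prod P).restrict (K ×ˢ univ)) := by
    intro T hKT
    rw [← Measure.restrict_univ (μ := P), Measure.prod_restrict, Measure.restrict_univ]
    conv_lhs => rw [← indicator_eq_of_support h0]
    rw [integral_indicator hKm, Measure.restrict_restrict hKm,
      prod_inter_prod, univ_inter, inter_eq_self_of_subset_left hKT]
  rw [key S hKS, key S' hKS']

end Aux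

section Aux2
variable {n : ℕ} {Ω : Type*} [MeasurableSpace Ω] {P : Measure Ω} [IsProbabilityMeasure P]
  {D : Set (EuclideanSpace ℝ (Fin n))} {p : ℝ}

lemma aux_finite {K : Set (EuclideanSpace ℝ (Fin n))} (hK : IsCompact K) :
    IsFiniteMeasure ((((volume : Measure (EuclideanSpace ℝ (Fin n))).restrict D).prod P).restrict
      (K ×ˢ (univ : Set Ω))) := by
  constructor
  rw [Measure.restrict_apply_univ, Measure.prod_prod, measure_univ, mul_one]
  exact lt_of_le_of_lt (Measure.restrict_apply_le _ _) hK.measure_lt_top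

lemma aux_integrable (hp : 1 < p) {f : EuclideanSpace ℝ (Fin n) × Ω → ℝ}
    (hf : MemLp f (ENNReal.ofReal p) ((volume.restrict D).prod P))
    {b : EuclideanSpace ℝ (Fin n) → ℝ} (hb : Measurable b) {C : ℝ} (hC : ∀ x, |b x| ≤ C)
    {K : Set (EuclideanSpace ℝ (Fin n))} (hK : IsCompact K) (hbK : ∀ x ∉ K, b x = 0)
    {X : Ω → ℝ} (hX : Measurable X) {CX : ℝ} (hCX : ∀ ω, |X ω| ≤ CX) :
    Integrable (fun q => f q * b q.1 * X q.2) ((volume.restrict D).prod P) := by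
  set μ := (volume.restrict D).prod P with hμ
  have hKm : MeasurableSet (K ×ˢ (univ : Set Ω)) := hK.measurableSet.prod MeasurableSet.univ
  haveI := aux_finite (P := P) (D := D) hK
  have h1p : (1 : ℝ≥0∞) ≤ ENNReal.ofReal p := by
    rw [ENNReal.one_le_ofReal]; exact hp.le
  have hfi : Integrable f (μ.restrict (K ×ˢ (univ : Set Ω))) :=
    (hf.restrict _).integrable h1p
  have hbnd : Integrable ((K ×ˢ (univ : Set Ω)).indicator fun q => ‖f q‖ * C * CX) μ :=
    (integrable_indicator_iff hKm).2 ((hfi.norm.mul_const C).mul_const CX)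
  refine Integrable.mono' hbnd ?_ ?_
  · exact (hf.aestronglyMeasurable.mul
      ((hb.comp measurable_fst).aestronglyMeasurable)).mul
      ((hX.comp measurable_snd).aestronglyMeasurable)
  · refine Filter.Eventually.of_forall fun q => ?_
    by_cases hq : q.1 ∈ K
    · rw [indicator_of_mem (by simp [hq])]
      have h1 : |b q.1| ≤ C := hC q.1
      have h2 : |X q.2| ≤ CX := hCX q.2
      have : ‖f q * b q.1 * X q.2‖ = ‖f q‖ * |b q.1| * |X q.2| := by
        simp [abs_mul, Real.norm_eq_abs]
      rw [this]
      have hC0 : (0:ℝ) ≤ C := (abs_nonneg _).trans h1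
      have h3 : ‖f q‖ * |b q.1| ≤ ‖f q‖ * C := mul_le_mul_of_nonneg_left h1 (norm_nonneg _)
      have h4 : ‖f q‖ * C * |X q.2| ≤ ‖f q‖ * C * CX :=
        mul_le_mul_of_nonneg_left h2 (by positivity)
      exact le_trans (mul_le_mul_of_nonneg_right h3 (abs_nonneg _)) h4
    · rw [indicator_of_notMem (by simp [hq]), hbK q.1 hq]
      simp

end Aux2

section Aux3
variable {n : ℕ} {Ω : Type*} [MeasurableSpace Ω] {P : Measure Ω} [IsProbabilityMeasure P]

/-- shift in the first coordinate -/
lemma aux_shift_mp (v : EuclideanSpace ℝ (Fin n)) :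
    MeasurePreserving (fun q : EuclideanSpace ℝ (Fin n) × Ω => (q.1 + v, q.2))
      ((volume : Measure (EuclideanSpace ℝ (Fin n))).prod P)
      ((volume : Measure (EuclideanSpace ℝ (Fin n))).prod P) :=
  (measurePreserving_add_right volume v).prod (MeasurePreserving.id P)

lemma aux_shift_emb (v : EuclideanSpace ℝ (Fin n)) :
    MeasurableEmbedding (fun q : EuclideanSpace ℝ (Fin n) × Ω => (q.1 + v, q.2)) := by
  have : (fun q : EuclideanSpace ℝ (Fin n) × Ω => (q.1 + v, q.2)) =
      ⇑((MeasurableEquiv.addRight v).prodCongr (MeasurableEquiv.refl Ω)) := rfl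
  rw [this]
  exact MeasurableEquiv.measurableEmbedding _

lemma aux_shift_mp_restrict (v : EuclideanSpace ℝ (Fin n))
    {A : Set (EuclideanSpace ℝ (Fin n))} (hA : MeasurableSet A) :
    MeasurePreserving (fun q : EuclideanSpace ℝ (Fin n) × Ω => (q.1 + v, q.2))
      ((volume.prod P).restrict (((fun x => x + v) ⁻¹' A) ×ˢ (univ : Set Ω)))
      ((volume.prod P).restrict (A ×ˢ (univ : Set Ω))) := by
  have hpre : (fun q : EuclideanSpace ℝ (Fin n) × Ω => (q.1 + v, q.2)) ⁻¹' (A ×ˢ univ)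
      = ((fun x => x + v) ⁻¹' A) ×ˢ (univ : Set Ω) := by
    ext ⟨x, ω⟩; simp
  refine ⟨(aux_shift_mp (P := P) v).measurable, ?_⟩
  rw [← hpre, ← Measure.restrict_map (aux_shift_mp (P := P) v).measurable
    (hA.prod MeasurableSet.univ), (aux_shift_mp (P := P) v).map_eq]

end Aux3
section Aux4
variable {n : ℕ} {Ω : Type*} [MeasurableSpace Ω] {P : Measure Ω} [IsProbabilityMeasure P]
  {D : Set (EuclideanSpace ℝ (Fin n))} {p : ℝ}

lemma aux_shift_int (hp : 1 < p) {f : EuclideanSpace ℝ (Fin n) × Ω → ℝ}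
    (hf : MemLp f (ENNReal.ofReal p) ((volume.restrict D).prod P))
    {b : EuclideanSpace ℝ (Fin n) → ℝ} (hb : Measurable b) {C : ℝ} (hC : ∀ x, |b x| ≤ C)
    {K : Set (EuclideanSpace ℝ (Fin n))} (hK : IsCompact K) (hbK : ∀ x ∉ K, b x = 0)
    (hKD : K ⊆ D) (v : EuclideanSpace ℝ (Fin n)) (hKvD : ∀ x ∈ K, x + v ∈ D)
    {X : Ω → ℝ} (hX : Measurable X) {CX : ℝ} (hCX : ∀ ω, |X ω| ≤ CX) :
    Integrable (fun q : EuclideanSpace ℝ (Fin n) × Ω => f (q.1 + v, q.2) * b q.1 * X q.2)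
      ((volume.restrict D).prod P) ∧
    ∫ q, f (q.1 + v, q.2) * b q.1 * X q.2 ∂((volume.restrict D).prod P)
      = ∫ q, f q * b (q.1 - v) * X q.2 ∂((volume.restrict D).prod P) := by
  set A : Set (EuclideanSpace ℝ (Fin n)) := (fun x => x + v) '' K with hAdef
  have hAcomp : IsCompact A := hK.image (continuous_id.add continuous_const)
  have hAm : MeasurableSet A := hAcomp.isClosed.measurableSet
  have hApre : (fun x => x + v) ⁻¹' A = K := preimage_image_eq K (add_left_injective v)
  have hAD : A ⊆ D := by rintro _ ⟨x, hx, rfl⟩; exact hKvD x hx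
  set H : EuclideanSpace ℝ (Fin n) × Ω → ℝ := fun q => f q * b (q.1 - v) * X q.2 with hHdef
  have hH0 : ∀ q : EuclideanSpace ℝ (Fin n) × Ω, q.1 ∉ A → H q = 0 := by
    intro q hq
    have hb0 : b (q.1 - v) = 0 := by
      by_contra hcon
      have : q.1 - v ∈ K := by
        by_contra hK'
        exact hcon (hbK _ hK')
      exact hq ⟨q.1 - v, this, by simp⟩
    simp [hHdef, hb0]
  have hbm' : Measurable fun x : EuclideanSpace ℝ (Fin n) => b (x - v) :=
    hb.comp (measurable_id.sub measurable_const)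
  have hb0' : ∀ x ∉ A, b (x - v) = 0 := fun x hx => by
    by_contra hcon
    have : x - v ∈ K := by by_contra hK'; exact hcon (hbK _ hK')
    exact hx ⟨x - v, this, by simp⟩
  have hHint : Integrable H ((volume.restrict D).prod P) :=
    aux_integrable hp hf hbm' (fun x => hC _) hAcomp hb0' hX hCX
  have hHintA : Integrable H ((volume.restrict A).prod P) :=
    (integrable_restrict_congr_of_support hAm hAD subset_rfl hH0).1 hHint
  have hprodA : (volume.restrict A).prod P = (volume.prod P).restrict (A ×ˢ (univ : Set Ω)) := by
    rw [← Measure.restrict_univ (μ := P), Measure.prod_restrict, Measure.restrict_univ]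
  have hprodK : (volume.restrict K).prod P = (volume.prod P).restrict (K ×ˢ (univ : Set Ω)) := by
    rw [← Measure.restrict_univ (μ := P), Measure.prod_restrict, Measure.restrict_univ]
  have hmp := aux_shift_mp_restrict (P := P) v hAm
  rw [hApre] at hmp
  -- the composed function
  have hcomp : (H ∘ fun q : EuclideanSpace ℝ (Fin n) × Ω => (q.1 + v, q.2))
      = fun q : EuclideanSpace ℝ (Fin n) × Ω => f (q.1 + v, q.2) * b q.1 * X q.2 := by
    funext q; simp [hHdef, Function.comp, add_sub_cancel_right]
  have htgt0 : ∀ q : EuclideanSpace ℝ (Fin n) × Ω, q.1 ∉ K →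
      f (q.1 + v, q.2) * b q.1 * X q.2 = 0 := by
    intro q hq; rw [hbK _ hq]; ring
  constructor
  · have h1 : Integrable (H ∘ fun q : EuclideanSpace ℝ (Fin n) × Ω => (q.1 + v, q.2))
        ((volume.prod P).restrict (K ×ˢ (univ : Set Ω))) :=
      ((aux_shift_emb (Ω := Ω) v).integrable_map_iff.symm.trans
        (by rw [hmp.map_eq])).2 (by rw [← hprodA] at *; exact hHintA)
    rw [hcomp] at h1
    rw [← hprodK] at h1
    exact (integrable_restrict_congr_of_support hK.measurableSet subset_rfl hKD htgt0).1 h1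
  · have h2 : ∫ q, H ((fun q : EuclideanSpace ℝ (Fin n) × Ω => (q.1 + v, q.2)) q)
        ∂((volume.prod P).restrict (K ×ˢ (univ : Set Ω)))
        = ∫ q, H q ∂((volume.prod P).restrict (A ×ˢ (univ : Set Ω))) :=
      hmp.integral_comp (aux_shift_emb (Ω := Ω) v) H
    calc ∫ q, f (q.1 + v, q.2) * b q.1 * X q.2 ∂((volume.restrict D).prod P)
        = ∫ q, f (q.1 + v, q.2) * b q.1 * X q.2 ∂((volume.restrict K).prod P) :=
          integral_restrict_congr_of_support hK.measurableSet hKD subset_rfl htgt0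
      _ = ∫ q, H q ∂((volume.prod P).restrict (A ×ˢ (univ : Set Ω))) := by
          rw [hprodK, ← h2]; congr 1; funext q; simp [hHdef, add_sub_cancel_right]
      _ = ∫ q, H q ∂((volume.restrict A).prod P) := by rw [hprodA]
      _ = ∫ q, H q ∂((volume.restrict D).prod P) :=
          integral_restrict_congr_of_support hAm subset_rfl hAD hH0

end Aux4

lemma real_mul_sign (x : ℝ) : x * Real.sign x = |x| := by
  rcases lt_trichotomy x 0 with hx | hx | hx
  · rw [Real.sign_of_neg hx, abs_of_neg hx]; ring
  · simp [hx]
  · rw [Real.sign_of_pos hx, abs_of_pos hx]; ring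

lemma real_sign_abs_le (x : ℝ) : |Real.sign x| ≤ 1 := by
  rcases Real.sign_apply_eq x with h | h | h <;> rw [h] <;> norm_num

lemma real_measurable_sign : Measurable Real.sign := by
  have : Real.sign = fun r : ℝ => if r < 0 then (-1:ℝ) else if 0 < r then 1 else 0 := by
    funext r; rfl
  rw [this]
  exact Measurable.ite (measurableSet_lt measurable_id measurable_const)
    measurable_const (Measurable.ite (measurableSet_lt measurable_const measurable_id)
      measurable_const measurable_const)

/-- probabilistic version of the weak-derivative criterion via difference
quotients: if the difference quotients of the random field `f` converge to `g` when tested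
against products `φ(x) X(ω)` of test functions and bounded measurable random variables,
then with probability one `g(·,ω)` is the weak derivative of `f(·,ω)` in direction `k`. -/
theorem weak_derivative_of_diff_quotients_random {n : ℕ} {Ω : Type*}
    [MeasurableSpace Ω] (P : Measure Ω) [IsProbabilityMeasure P] (hPc : P.IsComplete)
    (D : Set (EuclideanSpace ℝ (Fin n))) (hD : IsOpen D)
    (p : ℝ) (hp : 1 < p) (k : Fin n)
    (f g : EuclideanSpace ℝ (Fin n) × Ω → ℝ)
    (hf : MemLp f (ENNReal.ofReal p) ((volume.restrict D).prod P))
    (hg : MemLp g (ENNReal.ofReal p) ((volume.restrict D).prod P))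
    (h : ℕ → ℝ) (hh0 : ∀ m, h m ≠ 0) (hhlim : Tendsto h atTop (𝓝 0))
    (hconv : ∀ φ : EuclideanSpace ℝ (Fin n) → ℝ, IsTest D φ →
      ∀ X : Ω → ℝ, Measurable X → (∃ C, ∀ ω, |X ω| ≤ C) →
      Tendsto (fun m => ∫ q, (diffQuotR k (h m) f q - g q) * φ q.1 * X q.2
          ∂((volume.restrict D).prod P)) atTop (𝓝 0)) :
    ∀ φ : EuclideanSpace ℝ (Fin n) → ℝ, IsTest D φ →
      ∀ᵐ ω ∂P, ∫ x in D, f (x, ω) * pder k φ x = -∫ x in D, g (x, ω) * φ x := by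
  intro φ hφ
  obtain ⟨hφs, hφc, hφD⟩ := hφ
  have hφcont : Continuous φ := hφs.continuous
  set ν := (volume.restrict D).prod P with hνdef
  set e : EuclideanSpace ℝ (Fin n) := EuclideanSpace.single k 1 with hedef
  have he : ‖e‖ = 1 := by rw [hedef, EuclideanSpace.norm_single]; norm_num
  set K := tsupport φ with hKdef
  have hKcomp : IsCompact K := hφc
  have hKD : K ⊆ D := hφD
  have hφK : ∀ x ∉ K, φ x = 0 := fun x hx => image_eq_zero_of_notMem_tsupport hx
  obtain ⟨ε, hε, hthick⟩ := hKcomp.exists_thickening_subset_open hD hφD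
  set K₀ := Metric.cthickening (ε/2) K with hK₀def
  have hK₀comp : IsCompact K₀ := hKcomp.cthickening
  have hK₀D : K₀ ⊆ D :=
    (Metric.cthickening_subset_thickening' hε (by linarith) K).trans hthick
  have hKK₀ : K ⊆ K₀ := Metric.self_subset_cthickening K
  have hmemK₀ : ∀ v : EuclideanSpace ℝ (Fin n), ‖v‖ ≤ ε/2 → ∀ x ∈ K, x + v ∈ K₀ := by
    intro v hv x hx
    refine Metric.mem_cthickening_of_dist_le (x + v) x _ _ hx ?_
    rw [dist_eq_norm]
    simpa using hv
  obtain ⟨Cφ, hCφ⟩ := hφc.exists_bound_of_continuous hφcont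
  have hCφ' : ∀ x, |φ x| ≤ Cφ := fun x => hCφ x
  obtain ⟨L, hL⟩ := ContDiff.lipschitzWith_of_hasCompactSupport hφc hφs (by simp)
  have hL0 : (0:ℝ) ≤ (L:ℝ) := L.coe_nonneg
  -- difference quotients of φ (backwards)
  set ψ : ℕ → EuclideanSpace ℝ (Fin n) → ℝ :=
    fun m x => (φ (x - h m • e) - φ x) / h m with hψdef
  have hψmeas : ∀ m, Measurable (ψ m) := by
    intro m
    exact (((hφcont.comp (continuous_id.sub continuous_const)).sub hφcont).div_const _).measurable
  have hψbound : ∀ m x, |ψ m x| ≤ (L:ℝ) := by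
    intro m x
    have h1 : dist (φ (x - h m • e)) (φ x) ≤ (L:ℝ) * dist (x - h m • e) x :=
      hL.dist_le_mul _ _
    have h2 : dist (x - h m • e) x = |h m| := by
      rw [dist_eq_norm]
      simp [norm_smul, he, Real.norm_eq_abs]
    rw [Real.dist_eq, h2] at h1
    rw [hψdef]
    rw [abs_div]
    rw [div_le_iff₀ (abs_pos.2 (hh0 m))]
    linarith
  have hψsupp : ∀ m, |h m| ≤ ε/2 → ∀ x ∉ K₀, ψ m x = 0 := by
    intro m hm x hx
    have h1 : φ x = 0 := hφK x (fun hxK => hx (hKK₀ hxK))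
    have h2 : φ (x - h m • e) = 0 := by
      by_contra hcon
      have hmem : x - h m • e ∈ K := by
        by_contra hK'
        exact hcon (hφK _ hK')
      have : (x - h m • e) + h m • e ∈ K₀ :=
        hmemK₀ _ (by simp [norm_smul, he, Real.norm_eq_abs]; exact hm) _ hmem
      rw [sub_add_cancel] at this
      exact hx this
    rw [hψdef]; simp [h1, h2]
  have hψlim : ∀ x, Tendsto (fun m => ψ m x) atTop (𝓝 (-(pder k φ x))) := by
    intro x
    have hdiff : HasFDerivAt φ (fderiv ℝ φ x) x :=
      ((hφs.differentiable (by simp)) x).hasFDerivAt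
    have habs : Tendsto (fun m => |h m|) atTop (𝓝[>] 0) := by
      apply tendsto_nhdsWithin_of_tendsto_nhds_of_eventually_within
      · simpa using hhlim.abs
      · exact Eventually.of_forall fun m => abs_pos.2 (hh0 m)
    have hinv : Tendsto (fun m => ‖(-(h m))⁻¹‖) atTop atTop := by
      refine habs.inv_tendsto_nhdsGT_zero.congr fun m => ?_
      simp [Pi.inv_apply, Real.norm_eq_abs, abs_inv, abs_neg]
    have hlim := hdiff.lim e hinv
    have hfun : ∀ m, (-(h m))⁻¹ • (φ (x + ((-(h m))⁻¹)⁻¹ • e) - φ x) = -(ψ m x) := by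
      intro m
      rw [inv_inv, neg_smul, ← sub_eq_add_neg, smul_eq_mul, hψdef]
      field_simp
    have h2 := (hlim.congr hfun).neg
    simp only [neg_neg] at h2
    have : pder k φ x = fderiv ℝ φ x e := by rw [pder, hedef]
    rw [this]
    exact h2
  -- eventual smallness
  have hεev : ∀ᶠ m in atTop, |h m| ≤ ε/2 := by
    have := NormedAddCommGroup.tendsto_nhds_zero.mp hhlim (ε/2) (by positivity)
    exact this.mono fun m hm => le_of_lt (by simpa [Real.norm_eq_abs] using hm)
  have h1p : (1 : ℝ≥0∞) ≤ ENNReal.ofReal p := by rw [ENNReal.one_le_ofReal]; exact hp.le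
  -- bound on pder
  have hpder_bound : ∀ x, |pder k φ x| ≤ (L:ℝ) := by
    intro x
    have := le_of_tendsto ((hψlim x).abs) (Eventually.of_forall fun m => hψbound m x)
    rwa [abs_neg] at this
  have hpder_supp : ∀ x ∉ K₀, pder k φ x = 0 := by
    intro x hx
    have h1 : Tendsto (fun m => ψ m x) atTop (𝓝 (-(pder k φ x))) := hψlim x
    have h2 : Tendsto (fun m => ψ m x) atTop (𝓝 0) :=
      Tendsto.congr' (hεev.mono fun m hm => (hψsupp m hm x hx).symm) tendsto_const_nhds
    have := tendsto_nhds_unique h1 h2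
    simpa [neg_eq_zero] using this
  have hpder_meas : Measurable (pder k φ) := by
    have : pder k φ = fun x => fderiv ℝ φ x e := by funext x; rw [pder, hedef]
    rw [this]
    exact measurable_fderiv_apply_const ℝ φ e
  -- main step, for each bounded measurable X
  have hMain : ∀ X : Ω → ℝ, Measurable X → ∀ CX : ℝ, (0 ≤ CX) → (∀ ω, |X ω| ≤ CX) →
      Integrable (fun q => (f q * pder k φ q.1 + g q * φ q.1) * X q.2) ν ∧
      ∫ q, (f q * pder k φ q.1 + g q * φ q.1) * X q.2 ∂ν = 0 := by
    intro X hX CX hCX0 hCX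
    have hIφ : Integrable (fun q => f q * φ q.1 * X q.2) ν :=
      aux_integrable hp hf hφcont.measurable hCφ' hKcomp hφK hX hCX
    have hIgφ : Integrable (fun q => g q * φ q.1 * X q.2) ν :=
      aux_integrable hp hg hφcont.measurable hCφ' hKcomp hφK hX hCX
    have hIpder : Integrable (fun q => f q * pder k φ q.1 * X q.2) ν :=
      aux_integrable hp hf hpder_meas hpder_bound hK₀comp hpder_supp hX hCX
    have hIψ : ∀ m, |h m| ≤ ε/2 → Integrable (fun q => f q * ψ m q.1 * X q.2) ν :=
      fun m hm => aux_integrable hp hf (hψmeas m) (hψbound m) hK₀comp (hψsupp m hm) hX hCX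
    -- step B : integration by parts for difference quotients
    have hB : ∀ m, |h m| ≤ ε/2 →
        ∫ q, (diffQuotR k (h m) f q - g q) * φ q.1 * X q.2 ∂ν
          = ∫ q, f q * ψ m q.1 * X q.2 ∂ν - ∫ q, g q * φ q.1 * X q.2 ∂ν := by
      intro m hm
      have hvD : ∀ x ∈ K, x + h m • e ∈ D := by
        intro x hx
        exact hK₀D (hmemK₀ _ (by simp [norm_smul, he, Real.norm_eq_abs]; exact hm) x hx)
      obtain ⟨hIshift, hshift_eq⟩ :=
        aux_shift_int hp hf hφcont.measurable hCφ' hKcomp hφK hKD (h m • e) hvD hX hCX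
      -- the shifted-b integrand
      have hIφshift : Integrable (fun q => f q * φ (q.1 - h m • e) * X q.2) ν := by
        set A : Set (EuclideanSpace ℝ (Fin n)) := (fun x => x + h m • e) '' K with hAdef
        have hAcomp : IsCompact A := hKcomp.image (continuous_id.add continuous_const)
        refine aux_integrable (b := fun x => φ (x - h m • e)) hp hf
          ?_ (fun x => hCφ' _) hAcomp ?_ hX hCX
        · exact hφcont.measurable.comp (measurable_id.sub measurable_const)
        intro x hx
        apply hφK
        intro hmem
        exact hx ⟨x - h m • e, hmem, by simp⟩
      have hIdq : Integrable (fun q => diffQuotR k (h m) f q * φ q.1 * X q.2) ν := by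
        have heq : ∀ q : EuclideanSpace ℝ (Fin n) × Ω, diffQuotR k (h m) f q * φ q.1 * X q.2
            = (f (q.1 + h m • e, q.2) * φ q.1 * X q.2 - f q * φ q.1 * X q.2) / h m := by
          intro q; rw [diffQuotR]; ring
        exact ((hIshift.sub hIφ).div_const (h m)).congr
          (Eventually.of_forall fun q => (heq q).symm)
      -- expand and substitute
      have heq2 : ∀ q : EuclideanSpace ℝ (Fin n) × Ω,
          (diffQuotR k (h m) f q - g q) * φ q.1 * X q.2
          = diffQuotR k (h m) f q * φ q.1 * X q.2 - g q * φ q.1 * X q.2 := by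
        intro q; ring
      rw [integral_congr_ae (Eventually.of_forall heq2), integral_sub hIdq hIgφ]
      congr 1
      -- now: ∫ diffQuot * φ * X = ∫ f * ψ m * X
      have heq3 : ∀ q : EuclideanSpace ℝ (Fin n) × Ω, diffQuotR k (h m) f q * φ q.1 * X q.2
          = (f (q.1 + h m • e, q.2) * φ q.1 * X q.2 - f q * φ q.1 * X q.2) / h m := by
        intro q; rw [diffQuotR]; ring
      have heq4 : ∀ q : EuclideanSpace ℝ (Fin n) × Ω, f q * ψ m q.1 * X q.2
          = (f q * φ (q.1 - h m • e) * X q.2 - f q * φ q.1 * X q.2) / h m := by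
        intro q; rw [hψdef]; ring
      rw [integral_congr_ae (Eventually.of_forall heq3),
        integral_congr_ae (Eventually.of_forall heq4),
        integral_div, integral_div, integral_sub hIshift hIφ, integral_sub hIφshift hIφ,
        hshift_eq]
    -- dominated convergence
    have hT1 : Tendsto (fun m => ∫ q, f q * ψ m q.1 * X q.2 ∂ν) atTop
        (𝓝 (∫ q, f q * (-(pder k φ q.1)) * X q.2 ∂ν)) := by
      have hKm : MeasurableSet (K₀ ×ˢ (univ : Set Ω)) :=
        hK₀comp.measurableSet.prod MeasurableSet.univ
      haveI := aux_finite (P := P) (D := D) hK₀comp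
      refine tendsto_integral_filter_of_dominated_convergence
        ((K₀ ×ˢ (univ : Set Ω)).indicator fun q => ‖f q‖ * (L:ℝ) * CX) ?_ ?_ ?_ ?_
      · refine Eventually.of_forall fun m => ?_
        exact (hf.aestronglyMeasurable.mul
          ((hψmeas m).comp measurable_fst).aestronglyMeasurable).mul
          ((hX.comp measurable_snd).aestronglyMeasurable)
      · refine hεev.mono fun m hm => Eventually.of_forall fun q => ?_
        by_cases hq : q.1 ∈ K₀
        · rw [indicator_of_mem (by simp [hq])]
          have h1 : |ψ m q.1| ≤ (L:ℝ) := hψbound m q.1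
          have h2 : |X q.2| ≤ CX := hCX q.2
          have h3 : ‖f q * ψ m q.1 * X q.2‖ = ‖f q‖ * |ψ m q.1| * |X q.2| := by
            simp [abs_mul, Real.norm_eq_abs]
          rw [h3]
          have h4 : ‖f q‖ * |ψ m q.1| ≤ ‖f q‖ * (L:ℝ) :=
            mul_le_mul_of_nonneg_left h1 (norm_nonneg _)
          have h5 : ‖f q‖ * (L:ℝ) * |X q.2| ≤ ‖f q‖ * (L:ℝ) * CX :=
            mul_le_mul_of_nonneg_left h2 (by positivity)
          exact le_trans (mul_le_mul_of_nonneg_right h4 (abs_nonneg _)) h5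
        · rw [indicator_of_notMem (by simp [hq]), hψsupp m hm _ hq]
          simp
      · exact (integrable_indicator_iff hKm).2
          ((((hf.restrict _).integrable h1p).norm.mul_const _).mul_const _)
      · refine Eventually.of_forall fun q => ?_
        exact ((hψlim q.1).const_mul (f q)).mul_const (X q.2)
    have hT2 : Tendsto (fun m => ∫ q, (diffQuotR k (h m) f q - g q) * φ q.1 * X q.2 ∂ν) atTop
        (𝓝 (∫ q, f q * (-(pder k φ q.1)) * X q.2 ∂ν - ∫ q, g q * φ q.1 * X q.2 ∂ν)) := by
      refine Tendsto.congr' (hεev.mono fun m hm => (hB m hm).symm) (hT1.sub_const _)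
    have hzero := tendsto_nhds_unique hT2 (hconv φ ⟨hφs, hφc, hφD⟩ X hX ⟨CX, hCX⟩)
    have hneg : ∫ q, f q * (-(pder k φ q.1)) * X q.2 ∂ν
        = - ∫ q, f q * pder k φ q.1 * X q.2 ∂ν := by
      rw [← integral_neg]
      refine integral_congr_ae (Eventually.of_forall fun q => ?_)
      ring
    constructor
    · refine (hIpder.add hIgφ).congr (Eventually.of_forall fun q => ?_)
      simp only [Pi.add_apply]
      ring
    · have heq5 : ∀ q : EuclideanSpace ℝ (Fin n) × Ω,
          (f q * pder k φ q.1 + g q * φ q.1) * X q.2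
          = f q * pder k φ q.1 * X q.2 + g q * φ q.1 * X q.2 := by intro q; ring
      rw [integral_congr_ae (Eventually.of_forall heq5), integral_add hIpder hIgφ]
      rw [hneg] at hzero
      linarith
  -- conclude : the ω-marginal vanishes a.s.
  set G : EuclideanSpace ℝ (Fin n) × Ω → ℝ := fun q => f q * pder k φ q.1 + g q * φ q.1
    with hGdef
  have hGint : Integrable G ν := by
    have := (hMain (fun _ => 1) measurable_const 1 zero_le_one (by norm_num)).1
    refine this.congr (Eventually.of_forall fun q => by simp [hGdef])
  set F₀ : Ω → ℝ := fun ω => ∫ x, G (x, ω) ∂(volume.restrict D) with hF₀def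
  have hF₀int : Integrable F₀ P := hGint.integral_prod_right
  have hzero : ∀ X : Ω → ℝ, Measurable X → ∀ CX : ℝ, (0 ≤ CX) → (∀ ω, |X ω| ≤ CX) →
      ∫ ω, F₀ ω * X ω ∂P = 0 := by
    intro X hX CX hCX0 hCX
    obtain ⟨h2, h1⟩ := hMain X hX CX hCX0 hCX
    calc ∫ ω, F₀ ω * X ω ∂P
        = ∫ ω, ∫ x, G (x, ω) * X ω ∂(volume.restrict D) ∂P := by
          congr 1; funext ω; rw [integral_mul_const]
      _ = ∫ q, G q * X q.2 ∂ν := (integral_prod_symm _ h2).symm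
      _ = 0 := h1
  -- use X = sign of a measurable version of F₀
  set F' : Ω → ℝ := hF₀int.aestronglyMeasurable.mk F₀ with hF'def
  have hF'meas : Measurable F' := hF₀int.aestronglyMeasurable.measurable_mk
  have hFF' : F₀ =ᵐ[P] F' := hF₀int.aestronglyMeasurable.ae_eq_mk
  have habs0 : ∫ ω, |F' ω| ∂P = 0 := by
    have h1 := hzero (fun ω => Real.sign (F' ω)) (real_measurable_sign.comp hF'meas) 1
      zero_le_one (fun ω => real_sign_abs_le _)
    have h2 : (fun ω => F₀ ω * Real.sign (F' ω)) =ᵐ[P] fun ω => |F' ω| := by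
      filter_upwards [hFF'] with ω hω
      rw [hω, real_mul_sign]
    rw [integral_congr_ae h2] at h1
    exact h1
  have hF'int : Integrable F' P := hF₀int.congr hFF'
  have hF'zero : F' =ᵐ[P] 0 := by
    have := (integral_eq_zero_iff_of_nonneg (fun ω => abs_nonneg (F' ω)) hF'int.abs).1 habs0
    filter_upwards [this] with ω hω
    simpa [abs_eq_zero] using hω
  have hF₀zero : F₀ =ᵐ[P] 0 := hFF'.trans hF'zero
  -- slice integrability
  have hsl1 : ∀ᵐ ω ∂P, Integrable (fun x => f (x, ω) * pder k φ x) (volume.restrict D) := by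
    have hI : Integrable (fun q : EuclideanSpace ℝ (Fin n) × Ω => f q * pder k φ q.1)
        ν := by
      have := aux_integrable (CX := 1) hp hf hpder_meas hpder_bound hK₀comp hpder_supp
        (measurable_const : Measurable fun _ : Ω => (1:ℝ)) (fun ω => by norm_num)
      exact this.congr (Eventually.of_forall fun q => by simp)
    exact hI.prod_left_ae
  have hsl2 : ∀ᵐ ω ∂P, Integrable (fun x => g (x, ω) * φ x) (volume.restrict D) := by
    have hI : Integrable (fun q : EuclideanSpace ℝ (Fin n) × Ω => g q * φ q.1) ν := by
      have := aux_integrable (CX := 1) hp hg hφcont.measurable hCφ' hKcomp hφK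
        (measurable_const : Measurable fun _ : Ω => (1:ℝ)) (fun ω => by norm_num)
      exact this.congr (Eventually.of_forall fun q => by simp)
    exact hI.prod_left_ae
  filter_upwards [hF₀zero, hsl1, hsl2] with ω h0 h1 h2
  have hsum : F₀ ω = (∫ x in D, f (x, ω) * pder k φ x) + ∫ x in D, g (x, ω) * φ x := by
    rw [hF₀def]
    exact integral_add h1 h2
  rw [Pi.zero_apply] at h0
  rw [h0] at hsum
  linarith
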